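/- Let q be a prime power, n a prime number, t a positive integer, N = nt, and m a positive integer dividing q^n − 1. Let 1 ≤ s < k with gcd(s, N) = 1, let a_0, a_s be nonzero elements of the subfield 𝔽_{q^n} of 𝔽_{q^N}, and let V be a k-dimensional 𝔽_q-subspace of 𝔽_{q^N} whose subspace polynomial is L_V(X) = X^{q^k} + a_s X^{q^s} + a_0 X. Assume that a_0^{q^k − q^s} · (a_s^{q^k − 1})^{−1} does not lie in the subfield 𝔽_q of 𝔽_{q^N}. Then the code C := ∪_{i=0}^{n−1} {α^m σ_i(V) : α ∈ 𝔽_{q^N}^*} satisfies m·(q − 1)·|C| ≥ n·(q^N − 1), i.e., C contains at least (n/m)·(q^N − 1)/(q − 1) distinct subspaces. -/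

import Mathlib

open Polynomial

private lemma finsetCard_le_natDegree {F : Type*} [Field F] [DecidableEq F] (P : F[X])
    (hP : P ≠ 0) (T : Finset F) (h : ∀ x ∈ T, P.eval x = 0) : T.card ≤ P.natDegree := by
  have hsub : T ⊆ P.roots.toFinset := fun x hx =>
    Multiset.mem_toFinset.2 (Polynomial.mem_roots'.2 ⟨hP, h x hx⟩)
  exact le_trans (Finset.card_le_card hsub)
    (le_trans (Multiset.toFinset_card_le _) (Polynomial.card_roots' P))

private lemma pow_fix_mul {F : Type*} [Monoid F] {q : ℕ} (x : F) (a : ℕ) (h : x ^ q ^ a = x) :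
    ∀ t : ℕ, x ^ q ^ (a * t) = x
  | 0 => by simp
  | t + 1 => by
    have he : q ^ (a * (t + 1)) = q ^ (a * t) * q ^ a := by
      rw [← pow_add]; ring_nf
    rw [he, pow_mul, pow_fix_mul x a h t, h]

private lemma pow_fix_gcd {F : Type*} [Monoid F] {q : ℕ}
    (hinj : ∀ c : ℕ, Function.Injective fun y : F => y ^ q ^ c) (x : F) :
    ∀ a b : ℕ, x ^ q ^ a = x → x ^ q ^ b = x → x ^ q ^ Nat.gcd a b = x := by
  intro a b
  induction a, b using Nat.gcd.induction with
  | H0 n => intro _ h; simpa using h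
  | H1 a b ha ih =>
    intro h1 h2
    rw [Nat.gcd_rec]
    refine ih ?_ h1
    have hmod : a * (b / a) + b % a = b := Nat.div_add_mod b a
    have h3 : x ^ q ^ (a * (b / a)) = x := pow_fix_mul x a h1 _
    have h4 : (x ^ q ^ (b % a)) ^ q ^ (a * (b / a)) = x ^ q ^ (a * (b / a)) := by
      rw [← pow_mul, ← pow_add, Nat.add_comm, hmod, h2, h3]
    exact hinj (a * (b / a)) h4


/-- The `m`-quasi cyclic shift of a subspace `V` by `a`: `a • V = {a * v : v ∈ V}`. -/
noncomputable def qshift {K F : Type*} [Field K] [Field F] [Algebra K F]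
    (a : F) (V : Submodule K F) : Submodule K F :=
  V.map (LinearMap.mulLeft K a)

/-- The subspace polynomial `L_V(X) = ∏_{v ∈ V} (X - v)` of a subspace `V` of a
finite field. -/
noncomputable def subspacePoly {K F : Type*} [Field K] [Field F] [Algebra K F] [Fintype F]
    (V : Submodule K F) : F[X] :=
  ∏ v ∈ (Set.toFinite (V : Set F)).toFinset, (X - C v)

/-- The subspace distance `d(U,V) = dim U + dim V - 2 dim (U ⊓ V)`. -/
noncomputable def subspaceDist {K F : Type*} [Field K] [Field F] [Algebra K F]
    (U V : Submodule K F) : ℕ :=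
  Module.finrank K U + Module.finrank K V - 2 * Module.finrank K ↥(U ⊓ V)

theorem frobenius_quasi_orbit_code_size
    {K F : Type*} [Field K] [Fintype K] [Field F] [Fintype F] [Algebra K F]
    (q n t N m k s : ℕ) (hq : Fintype.card K = q)
    (hnp : n.Prime) (ht : 0 < t) (hN : N = n * t)
    (hF : Module.finrank K F = N) (hm : 0 < m) (hmdvd : m ∣ q ^ n - 1)
    (hs1 : 1 ≤ s) (hsk : s < k) (hsN : Nat.gcd s N = 1)
    (a0 as : F) (ha0 : a0 ≠ 0) (has : as ≠ 0)
    (ha0sub : a0 ^ q ^ n = a0) (hassub : as ^ q ^ n = as)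
    (V : Submodule K F) (hVk : Module.finrank K ↥V = k)
    (hLV : subspacePoly V = X ^ q ^ k + C as * X ^ q ^ s + C a0 * X)
    (hz : a0 ^ (q ^ k - q ^ s) * (as ^ (q ^ k - 1))⁻¹ ∉ Set.range (algebraMap K F)) :
    n * (q ^ N - 1) ≤
      m * (q - 1) *
        Set.ncard {W : Submodule K F | ∃ i < n, ∃ α : F, α ≠ 0 ∧
          (W : Set F) = (fun v => α ^ m * v ^ q ^ i) '' (V : Set F)} := by
  classical
  have hq2 : 1 < q := hq ▸ Fintype.one_lt_card
  have hq0 : 0 < q := lt_trans one_pos hq2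
  obtain ⟨p, hchar⟩ := CharP.exists K
  haveI := hchar
  haveI hp : Fact p.Prime := ⟨CharP.char_is_prime K p⟩
  haveI : CharP F p := charP_of_injective_algebraMap (algebraMap K F).injective p
  obtain ⟨r, -, hcard⟩ := FiniteField.card K p
  have hqp : q = p ^ (r : ℕ) := hq ▸ hcard
  have hqe : ∀ c : ℕ, q ^ c = p ^ ((r : ℕ) * c) := fun c => by rw [hqp, ← pow_mul]
  have hinj : ∀ c : ℕ, Function.Injective fun x : F => x ^ q ^ c := by
    intro c x y hxy
    refine (iterateFrobenius F p ((r : ℕ) * c)).injective ?_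
    rw [iterateFrobenius_def, iterateFrobenius_def, ← hqe]
    exact hxy
  have hadd : ∀ (c : ℕ) (x y : F), (x + y) ^ q ^ c = x ^ q ^ c + y ^ q ^ c := by
    intro c x y
    have h := map_add (iterateFrobenius F p ((r : ℕ) * c)) x y
    rw [iterateFrobenius_def, iterateFrobenius_def, iterateFrobenius_def, ← hqe] at h
    exact h
  have halg : ∀ (c : K) (e : ℕ), algebraMap K F c ^ q ^ e = algebraMap K F c := by
    intro c e
    rw [← map_pow]
    congr 1
    rw [← hq]
    exact FiniteField.pow_card_pow e c
  have hroot : ∀ v ∈ V, v ^ q ^ k + as * v ^ q ^ s + a0 * v = 0 := by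
    intro v hv
    have h0 : (subspacePoly V).eval v = 0 := by
      unfold subspacePoly
      rw [Polynomial.eval_prod]
      apply Finset.prod_eq_zero (i := v)
      · simpa using hv
      · simp
    rw [hLV] at h0
    simpa using h0
  have cardF : Fintype.card F = q ^ N := by rw [← hq, ← hF]; exact Module.card_eq_pow_finrank
  have cardV : (V : Set F).ncard = q ^ k := by
    have h1 : Nat.card ↥V = q ^ k := by
      rw [Nat.card_eq_fintype_card, ← hq, ← hVk]; exact Module.card_eq_pow_finrank
    rw [← Nat.card_coe_set_eq]
    exact h1
  have hqsle : q ^ s ≤ q ^ k := Nat.pow_le_pow_right hq0 (le_of_lt hsk)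
  have hqsk : q ^ s < q ^ k := Nat.pow_lt_pow_right hq2 hsk
  have hmemrange : ∀ x : F, x ^ q = x → x ∈ Set.range (algebraMap K F) := by
    intro x hx
    by_contra hxn
    set T : Finset F := Finset.univ.image (algebraMap K F) with hT
    have hTcard : T.card = q := by
      rw [hT, Finset.card_image_of_injective _ (algebraMap K F).injective,
        Finset.card_univ, hq]
    have hxT : x ∉ T := by
      intro hmem
      obtain ⟨c, -, rfl⟩ := Finset.mem_image.mp hmem
      exact hxn ⟨c, rfl⟩
    have hroots : ∀ y ∈ insert x T, (X ^ q - X : F[X]).eval y = 0 := by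
      intro y hy
      rcases Finset.mem_insert.mp hy with rfl | hyT
      · simp [hx]
      · obtain ⟨c, -, rfl⟩ := Finset.mem_image.mp hyT
        have := halg c 1
        rw [pow_one] at this
        simp [this]
    have hb := finsetCard_le_natDegree _ (FiniteField.X_pow_card_sub_X_ne_zero F hq2)
      (insert x T) hroots
    rw [FiniteField.X_pow_card_sub_X_natDegree_eq F hq2,
      Finset.card_insert_of_notMem hxT, hTcard] at hb
    omega
  have hqk1 : 1 < q ^ k := Nat.one_lt_pow (by omega) hq2
  have hqs1 : 1 < q ^ s := Nat.one_lt_pow (by omega) hq2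
  have hcoeffs : ∀ (b c : F) (U : Set F), U.ncard = q ^ k →
      (∀ x ∈ U, b * x ^ q ^ s + c * x = 0) → b = 0 ∧ c = 0 := by
    intro b c U hU hvan
    have hUfin : U.Finite := Set.toFinite U
    have hUcard : hUfin.toFinset.card = q ^ k := by
      rw [← Set.ncard_eq_toFinset_card U hUfin, hU]
    have hb : b = 0 := by
      by_contra hb
      have hPne : (C b * X ^ q ^ s + C c * X : F[X]) ≠ 0 := by
        intro h
        have h2 := congrArg (fun P => Polynomial.coeff P (q ^ s)) h
        simp only [Polynomial.coeff_add, Polynomial.coeff_C_mul, Polynomial.coeff_X_pow,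
          Polynomial.coeff_X, Polynomial.coeff_zero, if_pos rfl,
          if_neg (by omega : ¬ q ^ s = 1), mul_one, mul_zero, add_zero] at h2
        simp only [if_true, mul_one, if_neg (by omega : ¬ (1 : ℕ) = q ^ s), mul_zero,
          add_zero] at h2
        exact hb h2
      have hdeg : (C b * X ^ q ^ s + C c * X : F[X]).natDegree ≤ q ^ s := by
        compute_degree
        omega
      have hle := finsetCard_le_natDegree _ hPne hUfin.toFinset ?_
      · rw [hUcard] at hle
        have := le_trans hle hdeg
        omega
      · intro x hx
        have hxU : x ∈ U := (Set.Finite.mem_toFinset hUfin).mp hx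
        have := hvan x hxU
        simpa using this
    subst hb
    refine ⟨rfl, ?_⟩
    by_contra hc
    have hsub : U ⊆ {0} := by
      intro x hx
      have := hvan x hx
      simp only [zero_mul, zero_add] at this
      have : x = 0 := by
        rcases mul_eq_zero.mp this with h | h
        · exact absurd h hc
        · exact h
      simpa using this
    have := Set.ncard_le_ncard hsub (Set.finite_singleton 0)
    simp [hU] at this
    omega
  have hApow : ∀ (A : F) (a b : ℕ), b ≤ a → A ^ (a - b) * A ^ b = A ^ a := by
    intro A a b h
    rw [← pow_add, Nat.sub_add_cancel h]
  let Lm : ℕ → F → F →ₗ[K] F := fun i A =>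
    { toFun := fun x => A * x ^ q ^ i
      map_add' := fun x y => by rw [hadd]; ring
      map_smul' := fun c x => by
        simp only [Algebra.smul_def, RingHom.id_apply, smul_eq_mul]
        rw [mul_pow, halg]
        ring }
  have hLm : ∀ (i : ℕ) (A x : F), Lm i A x = A * x ^ q ^ i := fun _ _ _ => rfl
  have hfcar : ∀ (i : ℕ) (A : F),
      ((V.map (Lm i A) : Submodule K F) : Set F) = (fun v => A * v ^ q ^ i) '' (V : Set F) := by
    intro i A
    rw [Submodule.map_coe]
    rfl
  have hvanish : ∀ (i : ℕ) (A x : F), x ∈ V.map (Lm i A) →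
      x ^ q ^ k + A ^ (q ^ k - q ^ s) * as ^ q ^ i * x ^ q ^ s
        + A ^ (q ^ k - 1) * a0 ^ q ^ i * x = 0 := by
    intro i A x hx
    obtain ⟨v, hv, rfl⟩ := Submodule.mem_map.mp hx
    have hv0 : v ^ q ^ k + as * v ^ q ^ s + a0 * v = 0 := hroot v hv
    simp only [hLm]
    have t1 : (A * v ^ q ^ i) ^ q ^ k = A ^ q ^ k * (v ^ q ^ k) ^ q ^ i := by
      rw [mul_pow, pow_right_comm]
    have t2 : A ^ (q ^ k - q ^ s) * as ^ q ^ i * (A * v ^ q ^ i) ^ q ^ s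
        = A ^ q ^ k * (as * v ^ q ^ s) ^ q ^ i := by
      calc A ^ (q ^ k - q ^ s) * as ^ q ^ i * (A * v ^ q ^ i) ^ q ^ s
          = (A ^ (q ^ k - q ^ s) * A ^ q ^ s) * (as ^ q ^ i * (v ^ q ^ s) ^ q ^ i) := by
            rw [mul_pow A, pow_right_comm]; ring
        _ = A ^ q ^ k * (as * v ^ q ^ s) ^ q ^ i := by
            rw [hApow A _ _ hqsle, mul_pow]
    have t3 : A ^ (q ^ k - 1) * a0 ^ q ^ i * (A * v ^ q ^ i)
        = A ^ q ^ k * (a0 * v) ^ q ^ i := by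
      calc A ^ (q ^ k - 1) * a0 ^ q ^ i * (A * v ^ q ^ i)
          = (A ^ (q ^ k - 1) * A ^ 1) * (a0 ^ q ^ i * v ^ q ^ i) := by
            rw [pow_one]; ring
        _ = A ^ q ^ k * (a0 * v) ^ q ^ i := by
            rw [hApow A _ _ (by omega), mul_pow]
    have hexp : (A * v ^ q ^ i) ^ q ^ k
        + A ^ (q ^ k - q ^ s) * as ^ q ^ i * (A * v ^ q ^ i) ^ q ^ s
        + A ^ (q ^ k - 1) * a0 ^ q ^ i * (A * v ^ q ^ i)
        = A ^ q ^ k * (v ^ q ^ k + as * v ^ q ^ s + a0 * v) ^ q ^ i := by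
      conv_rhs => rw [hadd, hadd]
      rw [t1, t2, t3]
      ring
    rw [hexp, hv0, zero_pow (pow_pos hq0 i).ne', mul_zero]
  have hzn : (a0 ^ (q ^ k - q ^ s) * (as ^ (q ^ k - 1))⁻¹) ^ q ^ n
      = a0 ^ (q ^ k - q ^ s) * (as ^ (q ^ k - 1))⁻¹ := by
    rw [mul_pow, inv_pow, pow_right_comm a0, ha0sub, pow_right_comm as, hassub]
  have hzfix : ∀ e : ℕ, 0 < e → e < n →
      (a0 ^ (q ^ k - q ^ s) * (as ^ (q ^ k - 1))⁻¹) ^ q ^ e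
        = a0 ^ (q ^ k - q ^ s) * (as ^ (q ^ k - 1))⁻¹ → False := by
    intro e he hen hfix
    have hcop : Nat.gcd e n = 1 := by
      have hnd : ¬ n ∣ e := by
        intro hdvd
        exact absurd (Nat.le_of_dvd he hdvd) (not_le.mpr hen)
      have := (Nat.Prime.coprime_iff_not_dvd hnp).mpr hnd
      exact Nat.coprime_comm.mp this
    have hgcd := pow_fix_gcd hinj _ e n hfix hzn
    rw [hcop, pow_one] at hgcd
    exact hz (hmemrange _ hgcd)
  have hkey : ∀ (i j : ℕ) (A B : F), i < n → j < n → A ≠ 0 → B ≠ 0 →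
      V.map (Lm i A) = V.map (Lm j B) →
      i = j ∧ ∃ c : K, A = algebraMap K F c * B := by
    intro i j A B hi hj hA hB hUeq
    have hsubU : ∀ x ∈ V.map (Lm i A),
        (A ^ (q ^ k - q ^ s) * as ^ q ^ i - B ^ (q ^ k - q ^ s) * as ^ q ^ j) * x ^ q ^ s
          + (A ^ (q ^ k - 1) * a0 ^ q ^ i - B ^ (q ^ k - 1) * a0 ^ q ^ j) * x = 0 := by
      intro x hx
      have h1 := hvanish i A x hx
      have h2 := hvanish j B x (hUeq ▸ hx)
      linear_combination h1 - h2
    have hUcard : ((V.map (Lm i A) : Submodule K F) : Set F).ncard = q ^ k := by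
      rw [hfcar]
      have hinjm : Function.Injective fun v : F => A * v ^ q ^ i := by
        intro x y hxy
        exact hinj i (mul_left_cancel₀ hA hxy)
      rw [Set.ncard_image_of_injective _ hinjm, cardV]
    obtain ⟨d1, d2⟩ := hcoeffs _ _ _ hUcard hsubU
    have eq1 : A ^ (q ^ k - q ^ s) * as ^ q ^ i = B ^ (q ^ k - q ^ s) * as ^ q ^ j :=
      sub_eq_zero.mp d1
    have eq2 : A ^ (q ^ k - 1) * a0 ^ q ^ i = B ^ (q ^ k - 1) * a0 ^ q ^ j :=
      sub_eq_zero.mp d2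
    have hasi : as ^ q ^ i ≠ 0 := pow_ne_zero _ has
    have hasj : as ^ q ^ j ≠ 0 := pow_ne_zero _ has
    have ha0i : a0 ^ q ^ i ≠ 0 := pow_ne_zero _ ha0
    have ha0j : a0 ^ q ^ j ≠ 0 := pow_ne_zero _ ha0
    have E1 : A ^ ((q ^ k - q ^ s) * (q ^ k - 1)) * (as ^ q ^ i) ^ (q ^ k - 1)
        = B ^ ((q ^ k - q ^ s) * (q ^ k - 1)) * (as ^ q ^ j) ^ (q ^ k - 1) := by
      have h := congrArg (· ^ (q ^ k - 1)) eq1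
      simpa only [mul_pow, ← pow_mul] using h
    have E2 : A ^ ((q ^ k - q ^ s) * (q ^ k - 1)) * (a0 ^ q ^ i) ^ (q ^ k - q ^ s)
        = B ^ ((q ^ k - q ^ s) * (q ^ k - 1)) * (a0 ^ q ^ j) ^ (q ^ k - q ^ s) := by
      have h := congrArg (· ^ (q ^ k - q ^ s)) eq2
      rw [mul_comm (q ^ k - q ^ s) (q ^ k - 1)]
      simpa only [mul_pow, ← pow_mul] using h
    have main : (a0 ^ q ^ i) ^ (q ^ k - q ^ s) * (as ^ q ^ j) ^ (q ^ k - 1)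
        = (a0 ^ q ^ j) ^ (q ^ k - q ^ s) * (as ^ q ^ i) ^ (q ^ k - 1) := by
      have hAc : A ^ ((q ^ k - q ^ s) * (q ^ k - 1)) ≠ 0 := pow_ne_zero _ hA
      apply mul_left_cancel₀ hAc
      linear_combination (as ^ q ^ j) ^ (q ^ k - 1) * E2 - (a0 ^ q ^ j) ^ (q ^ k - q ^ s) * E1
    have hzij : (a0 ^ (q ^ k - q ^ s) * (as ^ (q ^ k - 1))⁻¹) ^ q ^ i
        = (a0 ^ (q ^ k - q ^ s) * (as ^ (q ^ k - 1))⁻¹) ^ q ^ j := by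
      rw [mul_pow, mul_pow, inv_pow, inv_pow,
        pow_right_comm a0 (q ^ k - q ^ s) (q ^ i), pow_right_comm a0 (q ^ k - q ^ s) (q ^ j),
        pow_right_comm as (q ^ k - 1) (q ^ i), pow_right_comm as (q ^ k - 1) (q ^ j)]
      rw [← div_eq_mul_inv, ← div_eq_mul_inv,
        div_eq_div_iff (pow_ne_zero _ hasi) (pow_ne_zero _ hasj)]
      linear_combination main
    have hij : i = j := by
      rcases lt_trichotomy i j with hlt | heq | hlt
      · exfalso
        have h5 : ((a0 ^ (q ^ k - q ^ s) * (as ^ (q ^ k - 1))⁻¹) ^ q ^ (j - i)) ^ q ^ i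
            = (a0 ^ (q ^ k - q ^ s) * (as ^ (q ^ k - 1))⁻¹) ^ q ^ i := by
          rw [← pow_mul, ← pow_add, Nat.sub_add_cancel (le_of_lt hlt)]
          exact hzij.symm
        exact hzfix (j - i) (by omega) (by omega) (hinj i h5)
      · exact heq
      · exfalso
        have h5 : ((a0 ^ (q ^ k - q ^ s) * (as ^ (q ^ k - 1))⁻¹) ^ q ^ (i - j)) ^ q ^ j
            = (a0 ^ (q ^ k - q ^ s) * (as ^ (q ^ k - 1))⁻¹) ^ q ^ j := by
          rw [← pow_mul, ← pow_add, Nat.sub_add_cancel (le_of_lt hlt)]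
          exact hzij
        exact hzfix (i - j) (by omega) (by omega) (hinj j h5)
    subst hij
    refine ⟨rfl, ?_⟩
    have hd1 : A ^ (q ^ k - q ^ s) = B ^ (q ^ k - q ^ s) := mul_right_cancel₀ hasi eq1
    have hd2 : A ^ (q ^ k - 1) = B ^ (q ^ k - 1) := mul_right_cancel₀ ha0i eq2
    set δ : F := A / B with hδdef
    have hδ0 : δ ≠ 0 := div_ne_zero hA hB
    have hδ1 : δ ^ (q ^ k - q ^ s) = 1 := by
      rw [hδdef, div_pow, hd1, div_self (pow_ne_zero _ hB)]
    have hδ2 : δ ^ (q ^ k - 1) = 1 := by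
      rw [hδdef, div_pow, hd2, div_self (pow_ne_zero _ hB)]
    have hδN : δ ^ (q ^ N - 1) = 1 := by
      have h := FiniteField.pow_card_sub_one_eq_one δ hδ0
      rw [cardF] at h
      exact h
    have hNpos : 0 < N := by rw [hN]; exact Nat.mul_pos hnp.pos ht
    have hqN1 : 1 ≤ q ^ N := Nat.one_le_pow _ _ hq0
    have P1 : δ ^ q ^ (k - s) = δ := by
      apply hinj s
      show (δ ^ q ^ (k - s)) ^ q ^ s = δ ^ q ^ s
      rw [← pow_mul, ← pow_add, Nat.sub_add_cancel (le_of_lt hsk)]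
      have h6 : δ ^ q ^ k = δ ^ (q ^ k - q ^ s) * δ ^ q ^ s := by
        rw [hApow δ _ _ hqsle]
      rw [h6, hδ1, one_mul]
    have P2 : δ ^ q ^ k = δ := by
      have h6 : δ ^ q ^ k = δ ^ (q ^ k - 1) * δ ^ 1 := by
        rw [hApow δ _ _ (by omega)]
      rw [h6, hδ2, one_mul, pow_one]
    have P3 : δ ^ q ^ N = δ := by
      have h6 : δ ^ q ^ N = δ ^ (q ^ N - 1) * δ ^ 1 := by
        rw [hApow δ _ _ (by omega)]
      rw [h6, hδN, one_mul, pow_one]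
    have Pg := pow_fix_gcd hinj δ _ _ (pow_fix_gcd hinj δ _ _ P1 P2) P3
    have hg1 : Nat.gcd (Nat.gcd (k - s) k) N = 1 := by
      set d := Nat.gcd (Nat.gcd (k - s) k) N with hd
      have h1 : d ∣ k - s := dvd_trans (Nat.gcd_dvd_left _ _) (Nat.gcd_dvd_left _ _)
      have h2 : d ∣ k := dvd_trans (Nat.gcd_dvd_left _ _) (Nat.gcd_dvd_right _ _)
      have h3 : d ∣ N := Nat.gcd_dvd_right _ _
      have h4 : d ∣ s := by
        have h6 := Nat.dvd_sub h2 h1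
        rwa [Nat.sub_sub_self (le_of_lt hsk)] at h6
      have h5 : d ∣ Nat.gcd s N := Nat.dvd_gcd h4 h3
      rw [hsN] at h5
      exact Nat.dvd_one.mp h5
    rw [hg1, pow_one] at Pg
    obtain ⟨c, hc⟩ := hmemrange δ Pg
    refine ⟨c, ?_⟩
    rw [hc, hδdef, div_mul_cancel₀ A hB]
  set f : Fin n × Fˣ → Submodule K F :=
    fun pr => V.map (Lm (pr.1 : ℕ) ((pr.2 : F) ^ m)) with hf
  have hSeq : {W : Submodule K F | ∃ i < n, ∃ α : F, α ≠ 0 ∧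
      (W : Set F) = (fun v => α ^ m * v ^ q ^ i) '' (V : Set F)} = Set.range f := by
    ext W
    constructor
    · rintro ⟨i, hi, α, hα, hWcar⟩
      refine ⟨(⟨i, hi⟩, Units.mk0 α hα), ?_⟩
      apply SetLike.coe_injective
      simp only [hf]
      rw [hfcar]
      simp only [Units.val_mk0]
      exact hWcar.symm
    · rintro ⟨⟨i, u⟩, rfl⟩
      refine ⟨(i : ℕ), i.isLt, (u : F), Units.ne_zero u, ?_⟩
      simp only [hf]
      exact (hfcar _ _).symm ▸ (hfcar (i : ℕ) ((u : F) ^ m))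
  rw [hSeq]
  have hrange : Set.range f = ↑(Finset.univ.image f) := by
    rw [Finset.coe_image, Finset.coe_univ, Set.image_univ]
  rw [hrange, Set.ncard_coe_finset]
  have hfib : ∀ W ∈ Finset.univ.image f,
      (Finset.univ.filter (fun pr => f pr = W)).card ≤ m * (q - 1) := by
    intro W hW
    obtain ⟨ju, -, rfl⟩ := Finset.mem_image.mp hW
    obtain ⟨j, u⟩ := ju
    set T := Finset.univ.filter (fun pr : Fin n × Fˣ => f pr = f (j, u)) with hT
    have hu0 : ((u : F)) ^ m ≠ 0 := pow_ne_zero _ (Units.ne_zero u)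
    have hmem : ∀ pr ∈ T, pr.1 = j ∧ ∃ c : K, c ≠ 0 ∧
        ((pr.2 : F)) ^ m = algebraMap K F c * ((u : F)) ^ m := by
      intro pr hpr
      have hfp : f pr = f (j, u) := (Finset.mem_filter.mp hpr).2
      simp only [hf] at hfp
      obtain ⟨hij, c, hc⟩ := hkey (pr.1 : ℕ) (j : ℕ) ((pr.2 : F) ^ m) ((u : F) ^ m)
        pr.1.isLt j.isLt (pow_ne_zero _ (Units.ne_zero _)) hu0 hfp
      refine ⟨Fin.ext hij, c, ?_, hc⟩
      intro hc0
      rw [hc0, map_zero, zero_mul] at hc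
      exact pow_ne_zero m (Units.ne_zero pr.2) hc
    set g : Fin n × Fˣ → F := fun pr => (pr.2 : F) ^ m * (((u : F)) ^ m)⁻¹ with hg
    have hinner : ∀ y ∈ T.image g, (T.filter (fun pr => g pr = y)).card ≤ m := by
      intro y hy
      have hinj2 : Set.InjOn (fun pr : Fin n × Fˣ => (pr.2 : F))
          ↑(T.filter (fun pr => g pr = y)) := by
        intro pr hpr pr' hpr' hee
        have hpr1 := (hmem pr (Finset.mem_of_mem_filter pr (Finset.mem_coe.mp hpr))).1
        have hpr2 := (hmem pr' (Finset.mem_of_mem_filter pr' (Finset.mem_coe.mp hpr'))).1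
        have h2 : pr.2 = pr'.2 := Units.ext hee
        exact Prod.ext (hpr1.trans hpr2.symm) h2
      rw [← Finset.card_image_of_injOn hinj2]
      have hPne : (X ^ m - C (y * ((u : F)) ^ m) : F[X]) ≠ 0 :=
        (monic_X_pow_sub_C _ (by omega : m ≠ 0)).ne_zero
      have hcard := finsetCard_le_natDegree _ hPne
        ((T.filter (fun pr => g pr = y)).image (fun pr : Fin n × Fˣ => (pr.2 : F))) ?_
      · rwa [natDegree_X_pow_sub_C] at hcard
      · intro x hx
        obtain ⟨pr, hpr, rfl⟩ := Finset.mem_image.mp hx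
        have hgy : g pr = y := (Finset.mem_filter.mp hpr).2
        have hpm : (pr.2 : F) ^ m = y * (u : F) ^ m := by
          rw [← hgy]
          simp only [hg]
          rw [mul_assoc, inv_mul_cancel₀ hu0, mul_one]
        simp [hpm]
    have hTb := Finset.card_le_mul_card_image T m hinner
    have himg : (T.image g).card ≤ q - 1 := by
      have hsub : T.image g ⊆ (Finset.univ.image (algebraMap K F)).erase 0 := by
        intro y hy
        obtain ⟨pr, hpr, rfl⟩ := Finset.mem_image.mp hy
        obtain ⟨-, c, hc0, hc⟩ := hmem pr hpr
        refine Finset.mem_erase.2 ⟨?_, Finset.mem_image.2 ⟨c, Finset.mem_univ _, ?_⟩⟩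
        · exact mul_ne_zero (pow_ne_zero _ (Units.ne_zero _)) (inv_ne_zero hu0)
        · show algebraMap K F c = (pr.2 : F) ^ m * (((u : F)) ^ m)⁻¹
          rw [hc, mul_assoc, mul_inv_cancel₀ hu0, mul_one]
      have hec : ((Finset.univ.image (algebraMap K F)).erase 0).card = q - 1 := by
        rw [Finset.card_erase_of_mem (Finset.mem_image.2 ⟨0, Finset.mem_univ _, map_zero _⟩),
          Finset.card_image_of_injective _ (algebraMap K F).injective, Finset.card_univ, hq]
      exact le_trans (Finset.card_le_card hsub) (le_of_eq hec)
    calc T.card ≤ m * (T.image g).card := hTb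
      _ ≤ m * (q - 1) := Nat.mul_le_mul_left m himg
  have hbound := Finset.card_le_mul_card_image (Finset.univ : Finset (Fin n × Fˣ))
    (m * (q - 1)) hfib
  have hcardP : (Finset.univ : Finset (Fin n × Fˣ)).card = n * (q ^ N - 1) := by
    rw [Finset.card_univ, Fintype.card_prod, Fintype.card_fin, Fintype.card_units, cardF]
  rw [hcardP] at hbound
  exact hbound
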